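/- Let m ≥ 3 and n ≥ 1 be integers, let Ā be the cyclic transfer matrix for width m, and let σ_c be the all-covered cyclic signature (covered, covered, …, covered). Then the domination polynomial of the m×n cylinder graph satisfies G_{m̄×n}(z) = Σ_σ (Ā^n)_{σ,σ_c}, where the sum runs over all cyclic signatures σ of length m that contain no uncovered symbol. -/

import Mathlib

open scoped Classical
open Polynomial

/-- The three possible states of a vertex relative to a vertex subset. -/
inductive VState : Type
  | unc | cov | occ
  deriving DecidableEq

instance : Fintype VState where
  elems := {VState.unc, VState.cov, VState.occ}
  complete := by intro x; cases x <;> simp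

/-- `S` is a dominating set of `G`: every vertex is in `S` or adjacent to a vertex of `S`. -/
def IsDominating {V : Type*} (G : SimpleGraph V) (S : Finset V) : Prop :=
  ∀ v : V, v ∈ S ∨ ∃ u ∈ S, G.Adj u v

/-- The domination polynomial of `G`. -/
noncomputable def domPoly {V : Type*} [Fintype V] (G : SimpleGraph V) : Polynomial ℤ :=
  ∑ S ∈ Finset.univ.filter (fun S : Finset V => IsDominating G S),
    (X : Polynomial ℤ) ^ S.card

/-- The m×n cylinder graph `C_m □ P_n`; the vertex `(i, j)` lies in column `i` and row `j`. -/
def cylinderGraph (m n : ℕ) : SimpleGraph (Fin m × Fin n) :=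
  (SimpleGraph.cycleGraph m).boxProd (SimpleGraph.pathGraph n)

/-- A signature of length `m`: a string over {unc, cov, occ} with no adjacent
(unc, occ) or (occ, unc) pair. -/
def IsSignature {m : ℕ} (σ : Fin m → VState) : Prop :=
  ∀ i : Fin m, ∀ h : (i : ℕ) + 1 < m,
    ¬(σ i = VState.unc ∧ σ ⟨(i : ℕ) + 1, h⟩ = VState.occ) ∧
    ¬(σ i = VState.occ ∧ σ ⟨(i : ℕ) + 1, h⟩ = VState.unc)

/-- A cyclic signature: a signature where the adjacency constraint is also imposed
on the pair (first symbol, last symbol). -/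
def IsCycSignature {m : ℕ} (σ : Fin m → VState) : Prop :=
  IsSignature σ ∧ ∀ h : 0 < m,
    ¬(σ ⟨0, h⟩ = VState.unc ∧ σ ⟨m - 1, Nat.sub_lt h Nat.one_pos⟩ = VState.occ) ∧
    ¬(σ ⟨0, h⟩ = VState.occ ∧ σ ⟨m - 1, Nat.sub_lt h Nat.one_pos⟩ = VState.unc)

/-- The cyclic successor of an index (mod `m`). -/
def cycNext {m : ℕ} (i : Fin m) : Fin m := ⟨((i : ℕ) + 1) % m, Nat.mod_lt _ i.pos⟩

/-- The cyclic predecessor of an index (mod `m`). -/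
def cycPrev {m : ℕ} (i : Fin m) : Fin m := ⟨((i : ℕ) + (m - 1)) % m, Nat.mod_lt _ i.pos⟩

/-- `τ` is (cyclically) compatible with `σ`, indices taken mod `m`. -/
def CompatibleCyc {m : ℕ} (τ σ : Fin m → VState) : Prop :=
  ∀ i : Fin m,
    (σ i = VState.unc → τ i = VState.occ) ∧
    (σ i = VState.occ → τ i = VState.cov ∨ τ i = VState.occ) ∧
    (τ i = VState.cov → σ i = VState.occ ∨
      τ (cycPrev i) = VState.occ ∨ τ (cycNext i) = VState.occ)

/-- The number of occupied symbols of a signature. -/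
def occCount {m : ℕ} (σ : Fin m → VState) : ℕ :=
  (Finset.univ.filter fun i => σ i = VState.occ).card

/-- The type of cyclic signatures of length `m`. -/
abbrev CycSignature (m : ℕ) := {σ : Fin m → VState // IsCycSignature σ}

/-- The cyclic transfer matrix for width `m`, over ℤ[z], indexed by cyclic signatures. -/
noncomputable def cycTransferMatrix (m : ℕ) :
    Matrix (CycSignature m) (CycSignature m) (Polynomial ℤ) :=
  fun τ σ =>
    if CompatibleCyc τ.1 σ.1 then (X : Polynomial ℤ) ^ occCount τ.1 else 0

/-- The all-covered signature `(cov, cov, …, cov)`. -/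
def allCov (m : ℕ) : Fin m → VState := fun _ => VState.cov

lemma allCov_isCycSignature (m : ℕ) : IsCycSignature (allCov m) := by
  refine ⟨fun i h => ?_, fun h => ?_⟩ <;>
    constructor <;> rintro ⟨h1, h2⟩ <;> simp [allCov] at h1

section Aux
open VState

variable {m : ℕ}

lemma cycNext_cycPrev (i : Fin m) : cycNext (cycPrev i) = i := by
  have hm : 0 < m := i.pos
  apply Fin.ext
  simp only [cycNext, cycPrev, Nat.mod_add_mod]
  have : (i : ℕ) + (m - 1) + 1 = (i : ℕ) + m := by omega
  rw [this, Nat.add_mod_right, Nat.mod_eq_of_lt i.isLt]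

lemma cycPrev_cycNext (i : Fin m) : cycPrev (cycNext i) = i := by
  have hm : 0 < m := i.pos
  apply Fin.ext
  simp only [cycNext, cycPrev, Nat.mod_add_mod]
  have : (i : ℕ) + 1 + (m - 1) = (i : ℕ) + m := by omega
  rw [this, Nat.add_mod_right, Nat.mod_eq_of_lt i.isLt]

/-- `IsCycSignature` rephrased in terms of `cycNext`. -/
lemma isCycSignature_iff (σ : Fin m → VState) (hm : 0 < m) :
    IsCycSignature σ ↔ ∀ i : Fin m,
      ¬(σ i = unc ∧ σ (cycNext i) = occ) ∧ ¬(σ i = occ ∧ σ (cycNext i) = unc) := by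
  constructor
  · rintro ⟨h1, h2⟩ i
    by_cases h : (i : ℕ) + 1 < m
    · have : cycNext i = ⟨(i : ℕ) + 1, h⟩ := Fin.ext (Nat.mod_eq_of_lt h)
      rw [this]; exact h1 i h
    · have hi : (i : ℕ) = m - 1 := by have := i.isLt; omega
      have hnext : cycNext i = ⟨0, hm⟩ := by
        apply Fin.ext
        simp only [cycNext, hi]
        have : m - 1 + 1 = m := by omega
        rw [this, Nat.mod_self]
      have hieq : i = ⟨m - 1, Nat.sub_lt hm Nat.one_pos⟩ := Fin.ext hi
      rw [hnext, hieq]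
      obtain ⟨c1, c2⟩ := h2 hm
      exact ⟨fun ⟨a, b⟩ => c2 ⟨b, a⟩, fun ⟨a, b⟩ => c1 ⟨b, a⟩⟩
  · intro h
    constructor
    · intro i hlt
      have : (⟨(i : ℕ) + 1, hlt⟩ : Fin m) = cycNext i := (Fin.ext (Nat.mod_eq_of_lt hlt)).symm
      rw [this]; exact h i
    · intro hm'
      have hnext : cycNext (⟨m - 1, Nat.sub_lt hm Nat.one_pos⟩ : Fin m) = ⟨0, hm⟩ := by
        apply Fin.ext
        simp only [cycNext]
        have : m - 1 + 1 = m := by omega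
        rw [this, Nat.mod_self]
      obtain ⟨c1, c2⟩ := h ⟨m - 1, Nat.sub_lt hm Nat.one_pos⟩
      rw [hnext] at c1 c2
      exact ⟨fun ⟨a, b⟩ => c2 ⟨b, a⟩, fun ⟨a, b⟩ => c1 ⟨b, a⟩⟩

lemma cycSig_unc_next {σ : Fin m → VState} (h : IsCycSignature σ) {i : Fin m}
    (hu : σ i = unc) : σ (cycNext i) ≠ occ := by
  have hm : 0 < m := i.pos
  intro ho
  exact ((isCycSignature_iff σ hm).1 h i).1 ⟨hu, ho⟩

lemma cycSig_unc_prev {σ : Fin m → VState} (h : IsCycSignature σ) {i : Fin m}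
    (hu : σ i = unc) : σ (cycPrev i) ≠ occ := by
  have hm : 0 < m := i.pos
  intro ho
  have := ((isCycSignature_iff σ hm).1 h (cycPrev i)).2
  rw [cycNext_cycPrev] at this
  exact this ⟨ho, hu⟩

end Aux
section Adj
open VState SimpleGraph

variable {m : ℕ}

lemma cycle_adj (hm : 3 ≤ m) {u v : Fin m} :
    (SimpleGraph.cycleGraph m).Adj u v ↔ u = cycNext v ∨ u = cycPrev v := by
  obtain ⟨k, rfl⟩ : ∃ k, m = k + 3 := ⟨m - 3, by omega⟩
  rw [SimpleGraph.cycleGraph_adj]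
  have h1 : cycNext v = v + 1 := by
    apply Fin.ext
    simp only [cycNext, Fin.add_def, Fin.val_one]
  have h2 : cycPrev v = v - 1 := by
    apply Fin.ext
    simp only [cycPrev, Fin.sub_def, Fin.val_one, Nat.add_comm]
  rw [h1, h2, sub_eq_iff_eq_add', sub_eq_iff_eq_add', eq_sub_iff_add_eq]
  exact or_congr Iff.rfl eq_comm

lemma cyl_adj (hm : 3 ≤ m) {n : ℕ} {u v : Fin m × Fin n} :
    (cylinderGraph m n).Adj u v ↔
      (u.2 = v.2 ∧ (u.1 = cycNext v.1 ∨ u.1 = cycPrev v.1)) ∨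
      (u.1 = v.1 ∧ ((u.2 : ℕ) + 1 = (v.2 : ℕ) ∨ (v.2 : ℕ) + 1 = (u.2 : ℕ))) := by
  rw [cylinderGraph, SimpleGraph.boxProd_adj, cycle_adj hm, SimpleGraph.pathGraph_adj]
  tauto

/-- `v` is dominated by `S` in `G`. -/
def Dominated {V : Type*} (G : SimpleGraph V) (S : Finset V) (v : V) : Prop :=
  v ∈ S ∨ ∃ u ∈ S, G.Adj u v

lemma isDominating_iff {V : Type*} (G : SimpleGraph V) (S : Finset V) :
    IsDominating G S ↔ ∀ v, Dominated G S v := Iff.rfl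

lemma dominated_iff (hm : 3 ≤ m) {n : ℕ} (S : Finset (Fin m × Fin n)) (i : Fin m) (j : Fin n) :
    Dominated (cylinderGraph m n) S (i, j) ↔
      (i, j) ∈ S ∨ (cycNext i, j) ∈ S ∨ (cycPrev i, j) ∈ S ∨
      (∃ j' : Fin n, ((j' : ℕ) + 1 = (j : ℕ) ∨ (j : ℕ) + 1 = (j' : ℕ)) ∧ (i, j') ∈ S) := by
  unfold Dominated
  constructor
  · rintro (h | ⟨⟨a, b⟩, hmem, hadj⟩)
    · exact Or.inl h
    · rw [cyl_adj hm] at hadj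
      rcases hadj with ⟨h2, h1 | h1⟩ | ⟨h1, h2⟩
      · subst h1; simp only at h2; subst h2; exact Or.inr (Or.inl hmem)
      · subst h1; simp only at h2; subst h2; exact Or.inr (Or.inr (Or.inl hmem))
      · simp only at h1 h2; subst h1
        exact Or.inr (Or.inr (Or.inr ⟨b, h2, hmem⟩))
  · rintro (h | h | h | ⟨j', h1, h2⟩)
    · exact Or.inl h
    · exact Or.inr ⟨(cycNext i, j), h, by rw [cyl_adj hm]; left; exact ⟨rfl, Or.inl rfl⟩⟩
    · exact Or.inr ⟨(cycPrev i, j), h, by rw [cyl_adj hm]; left; exact ⟨rfl, Or.inr rfl⟩⟩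
    · exact Or.inr ⟨(i, j'), h2, by rw [cyl_adj hm]; right; exact ⟨rfl, h1⟩⟩

end Adj
section ProfGood
open VState SimpleGraph Finset

/-- The profile (top-row signature) of a subset of the `(n+1)`-row cylinder. -/
noncomputable def prof {m n : ℕ} (S : Finset (Fin m × Fin (n + 1))) : Fin m → VState :=
  fun i =>
    if (i, Fin.last n) ∈ S then occ
    else if Dominated (cylinderGraph m (n + 1)) S (i, Fin.last n) then cov else unc

/-- All rows except the top one are dominated. -/
def Good {m n : ℕ} (S : Finset (Fin m × Fin (n + 1))) : Prop :=
  ∀ (i : Fin m) (j : Fin (n + 1)), (j : ℕ) < n → Dominated (cylinderGraph m (n + 1)) S (i, j)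

variable {m n : ℕ}

lemma prof_eq_occ {S : Finset (Fin m × Fin (n + 1))} {i : Fin m} :
    prof S i = occ ↔ (i, Fin.last n) ∈ S := by
  unfold prof; split_ifs <;> simp_all

lemma prof_eq_unc {S : Finset (Fin m × Fin (n + 1))} {i : Fin m} :
    prof S i = unc ↔ (i, Fin.last n) ∉ S ∧ ¬Dominated (cylinderGraph m (n + 1)) S (i, Fin.last n) := by
  unfold prof; split_ifs <;> simp_all

lemma prof_eq_cov {S : Finset (Fin m × Fin (n + 1))} {i : Fin m} :
    prof S i = cov ↔ (i, Fin.last n) ∉ S ∧ Dominated (cylinderGraph m (n + 1)) S (i, Fin.last n) := by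
  unfold prof; split_ifs <;> simp_all

lemma prof_ne_unc_of_next (hm : 3 ≤ m) {S : Finset (Fin m × Fin (n + 1))} {i : Fin m}
    (h : prof S (cycNext i) = occ) : prof S i ≠ unc := by
  rw [prof_eq_occ] at h
  intro hu
  obtain ⟨-, hnd⟩ := prof_eq_unc.1 hu
  exact hnd ((dominated_iff hm S i (Fin.last n)).2 (Or.inr (Or.inl h)))

lemma prof_ne_unc_of_prev (hm : 3 ≤ m) {S : Finset (Fin m × Fin (n + 1))} {i : Fin m}
    (h : prof S (cycPrev i) = occ) : prof S i ≠ unc := by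
  rw [prof_eq_occ] at h
  intro hu
  obtain ⟨-, hnd⟩ := prof_eq_unc.1 hu
  exact hnd ((dominated_iff hm S i (Fin.last n)).2 (Or.inr (Or.inr (Or.inl h))))

lemma prof_isCycSignature (hm : 3 ≤ m) (S : Finset (Fin m × Fin (n + 1))) :
    IsCycSignature (prof S) := by
  rw [isCycSignature_iff _ (by omega)]
  intro i
  constructor
  · rintro ⟨h1, h2⟩
    exact prof_ne_unc_of_next hm h2 h1
  · rintro ⟨h1, h2⟩
    refine prof_ne_unc_of_prev hm (i := cycNext i) ?_ h2
    rw [cycPrev_cycNext]; exact h1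

lemma isDominating_iff_good (hm : 3 ≤ m) (S : Finset (Fin m × Fin (n + 1))) :
    IsDominating (cylinderGraph m (n + 1)) S ↔ Good S ∧ ∀ i, prof S i ≠ unc := by
  rw [isDominating_iff]
  constructor
  · intro h
    refine ⟨fun i j _ => h (i, j), fun i hu => ?_⟩
    obtain ⟨-, hnd⟩ := prof_eq_unc.1 hu
    exact hnd (h (i, Fin.last n))
  · rintro ⟨hg, hp⟩ ⟨i, j⟩
    by_cases hj : (j : ℕ) < n
    · exact hg i j hj
    · have : j = Fin.last n := Fin.ext (by have := j.isLt; simp [Fin.last]; omega)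
      subst this
      rcases (em ((i, Fin.last n) ∈ S)) with h | h
      · exact Or.inl h
      · rcases (em (Dominated (cylinderGraph m (n + 1)) S (i, Fin.last n))) with h2 | h2
        · exact h2
        · exact absurd (prof_eq_unc.2 ⟨h, h2⟩) (hp i)

end ProfGood

section ResExt
open VState Finset

variable {m n : ℕ}

/-- Restriction of a subset of the `(n+2)`-row cylinder to the bottom `n+1` rows. -/
noncomputable def res {m n : ℕ} (S : Finset (Fin m × Fin (n + 2))) : Finset (Fin m × Fin (n + 1)) :=
  Finset.univ.filter fun p => (p.1, p.2.castSucc) ∈ S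

/-- Extension of a subset by a new top row whose occupied cells are given by `τ`. -/
noncomputable def exts {m n : ℕ} (S : Finset (Fin m × Fin (n + 1))) (τ : Fin m → VState) :
    Finset (Fin m × Fin (n + 2)) :=
  S.image (fun p => (p.1, p.2.castSucc)) ∪
    (Finset.univ.filter fun i => τ i = occ).image (fun i => (i, Fin.last (n + 1)))

lemma mem_res {S : Finset (Fin m × Fin (n + 2))} {i : Fin m} {j : Fin (n + 1)} :
    (i, j) ∈ res S ↔ (i, j.castSucc) ∈ S := by simp [res]

lemma mem_exts_castSucc {S : Finset (Fin m × Fin (n + 1))} {τ} {i : Fin m} {j : Fin (n + 1)} :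
    (i, j.castSucc) ∈ exts S τ ↔ (i, j) ∈ S := by
  unfold exts
  simp only [Finset.mem_union, Finset.mem_image, Finset.mem_filter, Finset.mem_univ, true_and]
  constructor
  · rintro (⟨⟨a, b⟩, hmem, heq⟩ | ⟨a, _, heq⟩)
    · obtain ⟨h1, h2⟩ := Prod.mk.injEq .. ▸ heq
      simp only at h1 h2
      rw [Fin.castSucc_inj] at h2
      subst h1; subst h2; exact hmem
    · exfalso
      have := congrArg Prod.snd heq
      simp only at this
      exact absurd this (Fin.castSucc_lt_last j).ne'
  · intro h; exact Or.inl ⟨(i, j), h, rfl⟩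

lemma mem_exts_last {S : Finset (Fin m × Fin (n + 1))} {τ} {i : Fin m} :
    (i, Fin.last (n + 1)) ∈ exts S τ ↔ τ i = occ := by
  unfold exts
  simp only [Finset.mem_union, Finset.mem_image, Finset.mem_filter, Finset.mem_univ, true_and]
  constructor
  · rintro (⟨⟨a, b⟩, hmem, heq⟩ | ⟨a, hocc, heq⟩)
    · exfalso
      have := congrArg Prod.snd heq
      simp only at this
      exact absurd this (Fin.castSucc_lt_last b).ne
    · have := congrArg Prod.fst heq
      simp only at this
      subst this; exact hocc
  · intro h; exact Or.inr ⟨i, h, rfl⟩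

lemma res_exts {S : Finset (Fin m × Fin (n + 1))} {τ} : res (exts S τ) = S := by
  ext ⟨i, j⟩
  rw [mem_res, mem_exts_castSucc]

lemma exts_res_prof {S : Finset (Fin m × Fin (n + 2))} : exts (res S) (prof S) = S := by
  ext ⟨i, j⟩
  rcases Fin.eq_castSucc_or_eq_last j with ⟨j', rfl⟩ | rfl
  · rw [mem_exts_castSucc, mem_res]
  · rw [mem_exts_last, prof_eq_occ]

lemma card_exts {S : Finset (Fin m × Fin (n + 1))} {τ} :
    (exts S τ).card = S.card + occCount τ := by
  unfold exts
  rw [Finset.card_union_of_disjoint, Finset.card_image_of_injective, Finset.card_image_of_injective]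
  · rfl
  · intro a b hab
    exact (Prod.mk.injEq .. ▸ hab).1
  · intro a b hab
    obtain ⟨h1, h2⟩ := Prod.mk.injEq .. ▸ hab
    exact Prod.ext h1 (Fin.castSucc_inj.mp h2)
  · rw [Finset.disjoint_left]
    rintro ⟨i, j⟩ h1 h2
    simp only [Finset.mem_image, Finset.mem_filter, Finset.mem_univ, true_and] at h1 h2
    obtain ⟨⟨a, b⟩, -, heq1⟩ := h1
    obtain ⟨c, -, heq2⟩ := h2
    have e1 := congrArg Prod.snd heq1
    have e2 := congrArg Prod.snd heq2
    simp only at e1 e2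
    rw [← e2] at e1
    exact absurd e1 (Fin.castSucc_lt_last b).ne

end ResExt
section DomTransfer
open VState Finset

variable {m n : ℕ}

lemma dominated_castSucc (hm : 3 ≤ m) {S : Finset (Fin m × Fin (n + 2))} {i : Fin m}
    {j : Fin (n + 1)} (hj : (j : ℕ) < n) :
    Dominated (cylinderGraph m (n + 2)) S (i, j.castSucc) ↔
      Dominated (cylinderGraph m (n + 1)) (res S) (i, j) := by
  rw [dominated_iff hm, dominated_iff hm]
  simp only [mem_res, Fin.coe_castSucc]
  refine or_congr Iff.rfl (or_congr Iff.rfl (or_congr Iff.rfl ?_))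
  constructor
  · rintro ⟨j', hrel, hmem⟩
    have hlt : (j' : ℕ) < n + 1 := by omega
    have hcs : (⟨(j' : ℕ), hlt⟩ : Fin (n + 1)).castSucc = j' := Fin.ext (by simp)
    exact ⟨⟨(j' : ℕ), hlt⟩, by simpa using hrel, by rwa [hcs]⟩
  · rintro ⟨j'', hrel, hmem⟩
    exact ⟨j''.castSucc, by simpa using hrel, hmem⟩

lemma dominated_topSmall (hm : 3 ≤ m) {S : Finset (Fin m × Fin (n + 2))} {i : Fin m} :
    Dominated (cylinderGraph m (n + 2)) S (i, (Fin.last n).castSucc) ↔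
      Dominated (cylinderGraph m (n + 1)) (res S) (i, Fin.last n) ∨
        (i, Fin.last (n + 1)) ∈ S := by
  rw [dominated_iff hm, dominated_iff hm]
  simp only [mem_res, Fin.coe_castSucc, Fin.val_last]
  constructor
  · rintro (h | h | h | ⟨j', hrel, hmem⟩)
    · exact Or.inl (Or.inl h)
    · exact Or.inl (Or.inr (Or.inl h))
    · exact Or.inl (Or.inr (Or.inr (Or.inl h)))
    · rcases hrel with h1 | h1
      · have hlt : (j' : ℕ) < n + 1 := by omega
        have hcs : (⟨(j' : ℕ), hlt⟩ : Fin (n + 1)).castSucc = j' := Fin.ext (by simp)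
        exact Or.inl (Or.inr (Or.inr (Or.inr ⟨⟨(j' : ℕ), hlt⟩, Or.inl (by simpa using h1),
          by rwa [hcs]⟩)))
      · have : j' = Fin.last (n + 1) := Fin.ext (by simp [Fin.val_last]; omega)
        rw [this] at hmem
        exact Or.inr hmem
  · rintro ((h | h | h | ⟨j'', hrel, hmem⟩) | hL)
    · exact Or.inl h
    · exact Or.inr (Or.inl h)
    · exact Or.inr (Or.inr (Or.inl h))
    · exact Or.inr (Or.inr (Or.inr ⟨j''.castSucc, by simpa using hrel, hmem⟩))
    · exact Or.inr (Or.inr (Or.inr ⟨Fin.last (n + 1), Or.inr (by simp), hL⟩))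

lemma dominated_topBig (hm : 3 ≤ m) {S : Finset (Fin m × Fin (n + 2))} {i : Fin m} :
    Dominated (cylinderGraph m (n + 2)) S (i, Fin.last (n + 1)) ↔
      (i, Fin.last (n + 1)) ∈ S ∨ (cycNext i, Fin.last (n + 1)) ∈ S ∨
      (cycPrev i, Fin.last (n + 1)) ∈ S ∨ (i, (Fin.last n).castSucc) ∈ S := by
  rw [dominated_iff hm]
  refine or_congr Iff.rfl (or_congr Iff.rfl (or_congr Iff.rfl ?_))
  constructor
  · rintro ⟨j', hrel, hmem⟩
    have hlt := j'.isLt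
    simp only [Fin.val_last] at hrel
    rcases hrel with h1 | h1
    · have : j' = (Fin.last n).castSucc := by
        apply Fin.ext
        simp only [Fin.coe_castSucc, Fin.val_last]
        omega
      rwa [this] at hmem
    · omega
  · intro h
    exact ⟨(Fin.last n).castSucc, Or.inl (by simp), h⟩

end DomTransfer
section StepLemmas
open VState Finset

variable {m n : ℕ}

lemma good_res (hm : 3 ≤ m) {S : Finset (Fin m × Fin (n + 2))} (hg : Good S) : Good (res S) := by
  intro i j hj
  refine (dominated_castSucc hm hj).1 (hg i j.castSucc ?_)
  simp only [Fin.coe_castSucc]; omega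

lemma compat_res (hm : 3 ≤ m) {S : Finset (Fin m × Fin (n + 2))} (hg : Good S) :
    CompatibleCyc (prof S) (prof (res S)) := by
  intro i
  refine ⟨?_, ?_, ?_⟩
  · intro hu
    obtain ⟨hnm, hnd⟩ := prof_eq_unc.1 hu
    have hdom := hg i (Fin.last n).castSucc (by simp)
    rcases (dominated_topSmall hm).1 hdom with h | h
    · exact absurd h hnd
    · exact prof_eq_occ.2 h
  · intro ho
    have hmem : (i, (Fin.last n).castSucc) ∈ S := mem_res.1 (prof_eq_occ.1 ho)
    have hdom : Dominated (cylinderGraph m (n + 2)) S (i, Fin.last (n + 1)) :=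
      (dominated_topBig hm).2 (Or.inr (Or.inr (Or.inr hmem)))
    rcases em ((i, Fin.last (n + 1)) ∈ S) with h | h
    · exact Or.inr (prof_eq_occ.2 h)
    · exact Or.inl (prof_eq_cov.2 ⟨h, hdom⟩)
  · intro hc
    obtain ⟨hnm, hd⟩ := prof_eq_cov.1 hc
    rcases (dominated_topBig hm).1 hd with h | h | h | h
    · exact absurd h hnm
    · exact Or.inr (Or.inr (prof_eq_occ.2 h))
    · exact Or.inr (Or.inl (prof_eq_occ.2 h))
    · exact Or.inl (prof_eq_occ.2 (mem_res.2 h))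

lemma good_exts (hm : 3 ≤ m) {S : Finset (Fin m × Fin (n + 1))} {τ : Fin m → VState}
    (hg : Good S) (hcompat : CompatibleCyc τ (prof S)) : Good (exts S τ) := by
  intro i j hj
  rcases Fin.eq_castSucc_or_eq_last j with ⟨j', rfl⟩ | rfl
  · rcases Nat.lt_or_ge (j' : ℕ) n with h | h
    · rw [dominated_castSucc hm h, res_exts]
      exact hg i j' h
    · have hj' : j' = Fin.last n := by
        apply Fin.ext
        have := j'.isLt
        simp only [Fin.val_last]; omega
      subst hj'
      rw [dominated_topSmall hm, res_exts, mem_exts_last]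
      cases hv : prof S i with
      | occ => exact Or.inl (Or.inl (prof_eq_occ.1 hv))
      | cov => exact Or.inl (prof_eq_cov.1 hv).2
      | unc => exact Or.inr ((hcompat i).1 hv)
  · simp only [Fin.val_last] at hj; omega

lemma prof_exts (hm : 3 ≤ m) {S : Finset (Fin m × Fin (n + 1))} {τ : Fin m → VState}
    (hτ : IsCycSignature τ) (hcompat : CompatibleCyc τ (prof S)) : prof (exts S τ) = τ := by
  funext i
  cases hv : τ i with
  | occ => exact prof_eq_occ.2 (mem_exts_last.2 hv)
  | cov =>
    refine prof_eq_cov.2 ⟨?_, ?_⟩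
    · intro hmem
      rw [mem_exts_last] at hmem
      exact VState.noConfusion (hv.symm.trans hmem)
    · rw [dominated_topBig hm]
      rcases (hcompat i).2.2 hv with h | h | h
      · exact Or.inr (Or.inr (Or.inr (mem_exts_castSucc.2 (prof_eq_occ.1 h))))
      · exact Or.inr (Or.inr (Or.inl (mem_exts_last.2 h)))
      · exact Or.inr (Or.inl (mem_exts_last.2 h))
  | unc =>
    refine prof_eq_unc.2 ⟨?_, ?_⟩
    · intro hmem
      rw [mem_exts_last] at hmem
      exact VState.noConfusion (hv.symm.trans hmem)
    · rw [dominated_topBig hm]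
      rintro (h | h | h | h)
      · rw [mem_exts_last] at h
        exact VState.noConfusion (hv.symm.trans h)
      · rw [mem_exts_last] at h
        exact cycSig_unc_next hτ hv h
      · rw [mem_exts_last] at h
        exact cycSig_unc_prev hτ hv h
      · rw [mem_exts_castSucc] at h
        rcases (hcompat i).2.1 (prof_eq_occ.2 h) with hc | hc <;>
          exact VState.noConfusion (hv.symm.trans hc)

end StepLemmas
section Recurrence
open VState Finset Polynomial

variable {m : ℕ}

/-- Partial domination generating polynomial with prescribed top-row profile. -/
noncomputable def Fpart (m n : ℕ) (τ : CycSignature m) : Polynomial ℤ :=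
  ∑ S ∈ Finset.univ.filter
      (fun S : Finset (Fin m × Fin (n + 1)) => Good S ∧ prof S = τ.1),
    (X : Polynomial ℤ) ^ S.card

lemma Fpart_succ (hm : 3 ≤ m) (n : ℕ) (τ : CycSignature m) :
    Fpart m (n + 1) τ = ∑ σ : CycSignature m, cycTransferMatrix m τ σ * Fpart m n σ := by
  classical
  rw [Fpart]
  rw [← Finset.sum_fiberwise_of_maps_to
    (g := fun S : Finset (Fin m × Fin (n + 2)) =>
      (⟨prof (res S), prof_isCycSignature hm _⟩ : CycSignature m))
    (t := Finset.univ) (fun x _ => Finset.mem_univ _)]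
  refine Finset.sum_congr rfl fun σ _ => ?_
  by_cases hcomp : CompatibleCyc τ.1 σ.1
  · rw [cycTransferMatrix, if_pos hcomp, Fpart, Finset.mul_sum]
    refine Finset.sum_nbij' (i := fun S => res S) (j := fun S' => exts S' τ.1)
      ?_ ?_ ?_ ?_ ?_
    · rintro S hS
      simp only [Finset.mem_filter, Finset.mem_univ, true_and] at hS ⊢
      obtain ⟨⟨hg, hp⟩, hσ⟩ := hS
      have hσ' : prof (res S) = σ.1 := congrArg Subtype.val hσ
      exact ⟨good_res hm hg, hσ'⟩
    · rintro S' hS'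
      simp only [Finset.mem_filter, Finset.mem_univ, true_and] at hS' ⊢
      obtain ⟨hg, hp⟩ := hS'
      have hcompat : CompatibleCyc τ.1 (prof S') := by rw [hp]; exact hcomp
      refine ⟨⟨good_exts hm hg hcompat, prof_exts hm τ.2 hcompat⟩, ?_⟩
      apply Subtype.ext
      simpa [res_exts] using hp
    · rintro S hS
      simp only [Finset.mem_filter, Finset.mem_univ, true_and] at hS
      obtain ⟨⟨hg, hp⟩, hσ⟩ := hS
      conv_lhs => rw [← hp]
      exact exts_res_prof
    · rintro S' _
      exact res_exts
    · rintro S hS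
      simp only [Finset.mem_filter, Finset.mem_univ, true_and] at hS
      obtain ⟨⟨hg, hp⟩, hσ⟩ := hS
      have hcard : S.card = (res S).card + occCount τ.1 := by
        nth_rewrite 1 [← exts_res_prof (S := S)]
        rw [hp, card_exts]
      rw [hcard, pow_add]
      ring
  · rw [cycTransferMatrix, if_neg hcomp, zero_mul]
    rw [Finset.filter_filter]
    rw [Finset.filter_false_of_mem, Finset.sum_empty]
    rintro S hS ⟨⟨hg, hp⟩, hσ⟩
    apply hcomp
    have hσ' : prof (res S) = σ.1 := congrArg Subtype.val hσ
    rw [← hp, ← hσ']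
    exact compat_res hm hg

end Recurrence
section Base
open VState Finset Polynomial

variable {m : ℕ}

/-- The one-row subset whose occupied cells are given by `τ`. -/
noncomputable def rowSet (τ : Fin m → VState) : Finset (Fin m × Fin 1) :=
  (Finset.univ.filter fun i => τ i = occ).image (fun i => (i, Fin.last 0))

lemma mem_rowSet {τ : Fin m → VState} {i : Fin m} {j : Fin 1} :
    (i, j) ∈ rowSet τ ↔ τ i = occ := by
  have hj : j = Fin.last 0 := Subsingleton.elim _ _
  subst hj
  simp only [rowSet, Finset.mem_image, Finset.mem_filter, Finset.mem_univ, true_and]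
  constructor
  · rintro ⟨a, ha, heq⟩
    have := congrArg Prod.fst heq
    simp only at this
    rwa [← this]
  · intro h; exact ⟨i, h, rfl⟩

lemma card_rowSet {τ : Fin m → VState} : (rowSet τ).card = occCount τ := by
  rw [rowSet, Finset.card_image_of_injective]
  · rfl
  · intro a b hab; exact (Prod.mk.injEq .. ▸ hab).1

lemma dominated_one (hm : 3 ≤ m) {S : Finset (Fin m × Fin 1)} {i : Fin m} {j : Fin 1} :
    Dominated (cylinderGraph m 1) S (i, j) ↔
      (i, j) ∈ S ∨ (cycNext i, j) ∈ S ∨ (cycPrev i, j) ∈ S := by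
  rw [dominated_iff hm]
  have hvert : ¬∃ j' : Fin 1, (((j' : ℕ) + 1 = (j : ℕ) ∨ (j : ℕ) + 1 = (j' : ℕ))
      ∧ (i, j') ∈ S) := by
    rintro ⟨j', h1, -⟩
    have h2 := j'.isLt
    have h3 := j.isLt
    omega
  constructor
  · rintro (h | h | h | hv)
    exacts [Or.inl h, Or.inr (Or.inl h), Or.inr (Or.inr h), absurd hv hvert]
  · rintro (h | h | h)
    exacts [Or.inl h, Or.inr (Or.inl h), Or.inr (Or.inr (Or.inl h))]

lemma Fpart_zero (hm : 3 ≤ m) (τ : CycSignature m) :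
    Fpart m 0 τ = cycTransferMatrix m τ ⟨allCov m, allCov_isCycSignature m⟩ := by
  classical
  rw [Fpart, cycTransferMatrix]
  by_cases hcomp : CompatibleCyc τ.1 (allCov m)
  · rw [if_pos hcomp]
    have hset : Finset.univ.filter
        (fun S : Finset (Fin m × Fin 1) => Good S ∧ prof S = τ.1) = {rowSet τ.1} := by
      ext S
      simp only [Finset.mem_filter, Finset.mem_univ, true_and, Finset.mem_singleton]
      constructor
      · rintro ⟨-, hp⟩
        ext ⟨i, j⟩
        rw [mem_rowSet]
        have hj : j = Fin.last 0 := Subsingleton.elim _ _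
        subst hj
        rw [← hp, prof_eq_occ]
      · rintro rfl
        refine ⟨fun i j hj => absurd hj (by omega), ?_⟩
        funext i
        cases hv : τ.1 i with
        | occ => exact prof_eq_occ.2 (mem_rowSet.2 hv)
        | cov =>
          refine prof_eq_cov.2 ⟨?_, ?_⟩
          · intro hmem
            exact VState.noConfusion (hv.symm.trans (mem_rowSet.1 hmem))
          · rw [dominated_one hm]
            rcases (hcomp i).2.2 hv with h | h | h
            · exact absurd h (by simp [allCov])
            · exact Or.inr (Or.inr (mem_rowSet.2 h))
            · exact Or.inr (Or.inl (mem_rowSet.2 h))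
        | unc =>
          refine prof_eq_unc.2 ⟨?_, ?_⟩
          · intro hmem
            exact VState.noConfusion (hv.symm.trans (mem_rowSet.1 hmem))
          · rw [dominated_one hm]
            rintro (h | h | h)
            · exact VState.noConfusion (hv.symm.trans (mem_rowSet.1 h))
            · exact cycSig_unc_next τ.2 hv (mem_rowSet.1 h)
            · exact cycSig_unc_prev τ.2 hv (mem_rowSet.1 h)
    rw [hset, Finset.sum_singleton, card_rowSet]
  · rw [if_neg hcomp]
    rw [Finset.filter_false_of_mem, Finset.sum_empty]
    rintro S - ⟨-, hp⟩
    apply hcomp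
    intro i
    refine ⟨fun h => absurd h (by simp [allCov]), fun h => absurd h (by simp [allCov]), ?_⟩
    intro hc
    rw [← hp] at hc
    obtain ⟨hnm, hd⟩ := prof_eq_cov.1 hc
    rcases (dominated_one hm).1 hd with h | h | h
    · exact absurd h hnm
    · right; right; rw [← hp]; exact prof_eq_occ.2 h
    · right; left; rw [← hp]; exact prof_eq_occ.2 h

lemma Fpart_eq_pow (hm : 3 ≤ m) : ∀ (n : ℕ) (τ : CycSignature m),
    Fpart m n τ = (cycTransferMatrix m ^ (n + 1)) τ ⟨allCov m, allCov_isCycSignature m⟩ := by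
  intro n
  induction n with
  | zero =>
    intro τ
    rw [pow_one]
    exact Fpart_zero hm τ
  | succ k ih =>
    intro τ
    rw [Fpart_succ hm k τ, pow_succ', Matrix.mul_apply]
    exact Finset.sum_congr rfl fun σ _ => by rw [ih σ]

end Base
/-- The domination polynomial of the m×n cylinder equals
`Σ_σ (Ā^n)_{σ,σ_c}`, the sum over all cyclic signatures `σ` of length `m` with no
uncovered symbol, where `Ā` is the cyclic transfer matrix and `σ_c` is the all-covered
cyclic signature. -/
theorem cylinder_domPoly_eq_transferMatrix_pow (m n : ℕ) (hm : 3 ≤ m) (hn : 1 ≤ n) :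
    domPoly (cylinderGraph m n) =
      ∑ σ ∈ Finset.univ.filter (fun σ : CycSignature m => ∀ i, σ.1 i ≠ VState.unc),
        (cycTransferMatrix m ^ n) σ ⟨allCov m, allCov_isCycSignature m⟩ := by
  classical
  obtain ⟨k, rfl⟩ : ∃ k, n = k + 1 := ⟨n - 1, by omega⟩
  rw [domPoly]
  rw [← Finset.sum_fiberwise_of_maps_to
    (g := fun S : Finset (Fin m × Fin (k + 1)) =>
      (⟨prof S, prof_isCycSignature hm S⟩ : CycSignature m))
    (t := Finset.univ.filter fun σ : CycSignature m => ∀ i, σ.1 i ≠ VState.unc)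
    ?_]
  · refine Finset.sum_congr rfl fun τ hτ => ?_
    rw [← Fpart_eq_pow hm k τ, Fpart, Finset.filter_filter]
    apply Finset.sum_congr _ (fun _ _ => rfl)
    apply Finset.filter_congr
    intro S _
    rw [Finset.mem_filter] at hτ
    constructor
    · rintro ⟨hd, hg⟩
      exact ⟨((isDominating_iff_good hm S).1 hd).1, congrArg Subtype.val hg⟩
    · rintro ⟨hg, hp⟩
      refine ⟨(isDominating_iff_good hm S).2 ⟨hg, ?_⟩, Subtype.ext hp⟩
      intro i
      rw [hp]
      exact hτ.2 i
  · intro S hS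
    rw [Finset.mem_filter] at hS ⊢
    exact ⟨Finset.mem_univ _, fun i => ((isDominating_iff_good hm S).1 hS.2).2 i⟩
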